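/- Let H be a separable complex Hilbert space, C a conjugation on H, and T a C-normal bounded linear operator on H. Then the anti-linear operator C ∘ T commutes with T*T, and for every continuous function f : ℝ → ℝ, C ∘ T commutes with the operator f(T*T) obtained from the continuous functional calculus of the positive operator T*T: (C ∘ T) ∘ f(T*T) = f(T*T) ∘ (C ∘ T). -/

import Mathlib

open scoped InnerProductSpace
open ContinuousLinearMap TopologicalSpace

/-- A conjugation on a complex Hilbert space: an anti-linear, involutive map
satisfying `⟪C x, C y⟫ = ⟪y, x⟫`. -/
def Conjugation {K : Type*} [NormedAddCommGroup K] [InnerProductSpace ℂ K] (C : K → K) : Prop :=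
  (∀ (a : ℂ) (x y : K), C (a • x + y) = (starRingEnd ℂ) a • C x + C y) ∧
  (∀ x, C (C x) = x) ∧
  (∀ x y : K, ⟪C x, C y⟫_ℂ = ⟪y, x⟫_ℂ)

/-- `T` is `C`-normal: `C T*T C = T T*` (pointwise). -/
def CNormal {K : Type*} [NormedAddCommGroup K] [InnerProductSpace ℂ K] [CompleteSpace K]
    (C : K → K) (T : K →L[ℂ] K) : Prop :=
  ∀ x, C (adjoint T (T (C x))) = T (adjoint T x)

set_option maxHeartbeats 2000000 in
/-- If `T` is `C`-normal, then the anti-linear operator `C ∘ T` commutes with `T*T` and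
with `f(T*T)` for every continuous `f : ℝ → ℝ` (continuous functional calculus). -/
theorem stmt_10 {H : Type*} [NormedAddCommGroup H] [InnerProductSpace ℂ H] [CompleteSpace H]
    [SeparableSpace H]
    (C : H → H) (hC : Conjugation C)
    (T : H →L[ℂ] H) (hT : CNormal C T) :
    (∀ x, C (T ((adjoint T * T) x)) = (adjoint T * T) (C (T x))) ∧
    ∀ f : ℝ → ℝ, Continuous f →
      ∀ x, C (T (cfc f (adjoint T * T) x)) = cfc f (adjoint T * T) (C (T x)) := by
  obtain ⟨hca, hci, hcip⟩ := hC
  set A : H →L[ℂ] H := adjoint T * T with hAdef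
  set B : H →L[ℂ] H := T * adjoint T with hBdef
  -- basic properties of the conjugation
  have hC0 : C 0 = 0 := by
    have h : C 0 = C 0 + C 0 := by simpa using hca 1 0 0
    exact left_eq_add.mp h
  have hadd : ∀ x y, C (x + y) = C x + C y := fun x y => by simpa using hca 1 x y
  have hsmul : ∀ (a : ℂ) x, C (a • x) = (starRingEnd ℂ) a • C x := fun a x => by
    simpa [hC0] using hca a x 0
  have hrsmul : ∀ (r : ℝ) (x : H), C (r • x) = r • C x := fun r x => by
    rw [← Complex.coe_smul, hsmul, Complex.conj_ofReal, Complex.coe_smul]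
  have hsub : ∀ x y, C (x - y) = C x - C y := fun x y => by
    have h : x - y = (-1 : ℂ) • y + x := by rw [neg_one_smul]; abel
    rw [h, hca]
    simp [sub_eq_add_neg, add_comm]
  have hnorm : ∀ x, ‖C x‖ = ‖x‖ := fun x => by
    have h := congrArg (RCLike.re (K := ℂ)) (hcip x x)
    rw [inner_self_eq_norm_sq, inner_self_eq_norm_sq] at h
    have h2 : ‖C x‖ ^ 2 = ‖x‖ ^ 2 := h
    have h3 := norm_nonneg (C x)
    have h4 := norm_nonneg x
    apply le_antisymm <;> nlinarith
  -- key intertwining relations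
  have hCB : ∀ x, C (B x) = A (C x) := by
    intro x
    have h := hT x
    have h2 := congrArg C h
    rw [hci] at h2
    exact h2.symm
  have hTA : T * A = B * T := (mul_assoc T (adjoint T) T).symm
  -- selfadjointness
  have hA : IsSelfAdjoint A := by
    rw [hAdef, ← ContinuousLinearMap.star_eq_adjoint]; exact IsSelfAdjoint.star_mul_self T
  have hB : IsSelfAdjoint B := by
    rw [hBdef, ← ContinuousLinearMap.star_eq_adjoint]; exact IsSelfAdjoint.mul_star_self T
  -- polynomial intertwining
  have pT : ∀ p : Polynomial ℝ, T * Polynomial.aeval A p = Polynomial.aeval B p * T := by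
    intro p
    induction p using Polynomial.induction_on with
    | C a => simp only [Polynomial.aeval_C]; exact (Algebra.commutes a T).symm
    | add p q hp hq => simp only [map_add, mul_add, add_mul, hp, hq]
    | monomial n a h =>
      have e : (Polynomial.C a * Polynomial.X ^ (n + 1) : Polynomial ℝ)
          = Polynomial.C a * Polynomial.X ^ n * Polynomial.X := by ring
      have eA : Polynomial.aeval A (Polynomial.C a * Polynomial.X ^ (n + 1))
          = Polynomial.aeval A (Polynomial.C a * Polynomial.X ^ n) * A := by
        rw [e, map_mul, Polynomial.aeval_X]
      have eB : Polynomial.aeval B (Polynomial.C a * Polynomial.X ^ (n + 1))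
          = Polynomial.aeval B (Polynomial.C a * Polynomial.X ^ n) * B := by
        rw [e, map_mul, Polynomial.aeval_X]
      rw [eA, eB, ← mul_assoc, h, mul_assoc, hTA, ← mul_assoc]
  have pC : ∀ p : Polynomial ℝ, ∀ y, C (Polynomial.aeval B p y) = Polynomial.aeval A p (C y) := by
    intro p
    induction p using Polynomial.induction_on with
    | C a =>
      intro y
      simp only [Polynomial.aeval_C, Algebra.algebraMap_eq_smul_one,
        ContinuousLinearMap.smul_apply, ContinuousLinearMap.one_apply]
      exact hrsmul a y
    | add p q hp hq =>
      intro y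
      simp only [map_add, ContinuousLinearMap.add_apply, hadd, hp, hq]
    | monomial n a h =>
      intro y
      have e : (Polynomial.C a * Polynomial.X ^ (n + 1) : Polynomial ℝ)
          = Polynomial.C a * Polynomial.X ^ n * Polynomial.X := by ring
      have eA : Polynomial.aeval A (Polynomial.C a * Polynomial.X ^ (n + 1))
          = Polynomial.aeval A (Polynomial.C a * Polynomial.X ^ n) * A := by
        rw [e, map_mul, Polynomial.aeval_X]
      have eB : Polynomial.aeval B (Polynomial.C a * Polynomial.X ^ (n + 1))
          = Polynomial.aeval B (Polynomial.C a * Polynomial.X ^ n) * B := by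
        rw [e, map_mul, Polynomial.aeval_X]
      rw [eA, eB]
      show C (Polynomial.aeval B (Polynomial.C a * Polynomial.X ^ n) (B y)) = _
      rw [h (B y), hCB]
      rfl
  -- spectrum bounds
  set M : ℝ := max (‖A‖ * ‖(1 : H →L[ℂ] H)‖) (‖B‖ * ‖(1 : H →L[ℂ] H)‖) with hMdef
  have hspecA : ∀ r ∈ spectrum ℝ A, r ∈ Set.Icc (-M) M := by
    intro r hr
    have h := spectrum.norm_le_norm_mul_of_mem hr
    rw [Real.norm_eq_abs] at h
    exact Set.mem_Icc.mpr (abs_le.mp (h.trans (le_max_left _ _)))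
  have hspecB : ∀ r ∈ spectrum ℝ B, r ∈ Set.Icc (-M) M := by
    intro r hr
    have h := spectrum.norm_le_norm_mul_of_mem hr
    rw [Real.norm_eq_abs] at h
    exact Set.mem_Icc.mpr (abs_le.mp (h.trans (le_max_right _ _)))
  -- norm estimate for cfc of small functions
  have key : ∀ (g : ℝ → ℝ), Continuous g → ∀ (ε : ℝ), 0 ≤ ε →
      (∀ r ∈ Set.Icc (-M) M, |g r| ≤ ε) → ‖cfc g A‖ ≤ ε ∧ ‖cfc g B‖ ≤ ε := by
    intro g hg ε hε hbound
    constructor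
    · exact norm_cfc_le hε fun r hr => by
        simpa [Real.norm_eq_abs] using hbound r (hspecA r hr)
    · exact norm_cfc_le hε fun r hr => by
        simpa [Real.norm_eq_abs] using hbound r (hspecB r hr)
  -- step 1: T intertwines cfc of A and B
  have stepT : ∀ g : ℝ → ℝ, Continuous g → ∀ x, T (cfc g A x) = cfc g B (T x) := by
    intro g hg x
    have hle : ∀ ε : ℝ, 0 < ε → ‖T (cfc g A x) - cfc g B (T x)‖ ≤ 0 + ε := by
      intro ε hε
      set K : ℝ := ‖T‖ * ‖x‖ + ‖T x‖ with hK
      have hK0 : 0 ≤ K := by positivity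
      have hε' : 0 < ε / (K + 1) := by positivity
      obtain ⟨p, hp⟩ := exists_polynomial_near_of_continuousOn (-M) M g hg.continuousOn
        (ε / (K + 1)) hε'
      set d : ℝ → ℝ := fun r => g r - p.eval r with hd
      have hdc : Continuous d := hg.sub (Polynomial.continuous p)
      have hdb : ∀ r ∈ Set.Icc (-M) M, |d r| ≤ ε / (K + 1) := fun r hr => by
        rw [hd, abs_sub_comm]; exact (hp r hr).le
      obtain ⟨hnA, hnB⟩ := key d hdc (ε / (K + 1)) hε'.le hdb
      have hcfcA : cfc g A - Polynomial.aeval A p = cfc d A := by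
        rw [hd, cfc_sub g (fun r => Polynomial.eval r p) A hg.continuousOn
            (Polynomial.continuous p).continuousOn, cfc_polynomial p A hA]
      have hcfcB : cfc g B - Polynomial.aeval B p = cfc d B := by
        rw [hd, cfc_sub g (fun r => Polynomial.eval r p) B hg.continuousOn
            (Polynomial.continuous p).continuousOn, cfc_polynomial p B hB]
      have hpT : T (Polynomial.aeval A p x) = Polynomial.aeval B p (T x) :=
        congrArg (fun S : H →L[ℂ] H => S x) (pT p)
      have split : T (cfc g A x) - cfc g B (T x)
          = T ((cfc g A - Polynomial.aeval A p) x) - (cfc g B - Polynomial.aeval B p) (T x) := by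
        simp only [ContinuousLinearMap.sub_apply, map_sub, hpT]
        abel
      have e1 : ‖T ((cfc g A - Polynomial.aeval A p) x)‖ ≤ ‖T‖ * (ε / (K + 1) * ‖x‖) := by
        refine (T.le_opNorm _).trans ?_
        gcongr
        rw [hcfcA]
        exact ((cfc d A).le_opNorm x).trans
          (mul_le_mul_of_nonneg_right hnA (norm_nonneg x))
      have e2 : ‖(cfc g B - Polynomial.aeval B p) (T x)‖ ≤ ε / (K + 1) * ‖T x‖ := by
        rw [hcfcB]
        exact ((cfc d B).le_opNorm _).trans
          (mul_le_mul_of_nonneg_right hnB (norm_nonneg _))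
      have main : ‖T (cfc g A x) - cfc g B (T x)‖
          ≤ ‖T‖ * (ε / (K + 1) * ‖x‖) + ε / (K + 1) * ‖T x‖ := by
        rw [split]
        exact (norm_sub_le _ _).trans (add_le_add e1 e2)
      have heq : ‖T‖ * (ε / (K + 1) * ‖x‖) + ε / (K + 1) * ‖T x‖ = ε / (K + 1) * K := by
        rw [hK]; ring
      have hfin : ε / (K + 1) * K ≤ ε := by
        have h1 : ε / (K + 1) * K ≤ ε / (K + 1) * (K + 1) :=
          mul_le_mul_of_nonneg_left (by linarith) hε'.le
        rwa [div_mul_cancel₀ ε (by positivity : (K : ℝ) + 1 ≠ 0)] at h1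
      rw [zero_add]
      exact main.trans (heq ▸ hfin)
    have h0 : ‖T (cfc g A x) - cfc g B (T x)‖ ≤ 0 := le_of_forall_pos_le_add hle
    rw [← sub_eq_zero]
    exact norm_le_zero_iff.mp h0
  -- step 2: C intertwines cfc of B and A
  have stepC : ∀ g : ℝ → ℝ, Continuous g → ∀ y, C (cfc g B y) = cfc g A (C y) := by
    intro g hg y
    have hle : ∀ ε : ℝ, 0 < ε → ‖C (cfc g B y) - cfc g A (C y)‖ ≤ 0 + ε := by
      intro ε hε
      set K : ℝ := ‖y‖ + ‖C y‖ with hK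
      have hK0 : 0 ≤ K := by positivity
      have hε' : 0 < ε / (K + 1) := by positivity
      obtain ⟨p, hp⟩ := exists_polynomial_near_of_continuousOn (-M) M g hg.continuousOn
        (ε / (K + 1)) hε'
      set d : ℝ → ℝ := fun r => g r - p.eval r with hd
      have hdc : Continuous d := hg.sub (Polynomial.continuous p)
      have hdb : ∀ r ∈ Set.Icc (-M) M, |d r| ≤ ε / (K + 1) := fun r hr => by
        rw [hd, abs_sub_comm]; exact (hp r hr).le
      obtain ⟨hnA, hnB⟩ := key d hdc (ε / (K + 1)) hε'.le hdb
      have hcfcA : cfc g A - Polynomial.aeval A p = cfc d A := by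
        rw [hd, cfc_sub g (fun r => Polynomial.eval r p) A hg.continuousOn
            (Polynomial.continuous p).continuousOn, cfc_polynomial p A hA]
      have hcfcB : cfc g B - Polynomial.aeval B p = cfc d B := by
        rw [hd, cfc_sub g (fun r => Polynomial.eval r p) B hg.continuousOn
            (Polynomial.continuous p).continuousOn, cfc_polynomial p B hB]
      have split : C (cfc g B y) - cfc g A (C y)
          = C ((cfc g B - Polynomial.aeval B p) y) - (cfc g A - Polynomial.aeval A p) (C y) := by
        rw [ContinuousLinearMap.sub_apply, ContinuousLinearMap.sub_apply, hsub, pC p y]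
        abel
      have e1 : ‖C ((cfc g B - Polynomial.aeval B p) y)‖ ≤ ε / (K + 1) * ‖y‖ := by
        rw [hnorm, hcfcB]
        exact ((cfc d B).le_opNorm _).trans
          (mul_le_mul_of_nonneg_right hnB (norm_nonneg _))
      have e2 : ‖(cfc g A - Polynomial.aeval A p) (C y)‖ ≤ ε / (K + 1) * ‖C y‖ := by
        rw [hcfcA]
        exact ((cfc d A).le_opNorm _).trans
          (mul_le_mul_of_nonneg_right hnA (norm_nonneg _))
      have main : ‖C (cfc g B y) - cfc g A (C y)‖
          ≤ ε / (K + 1) * ‖y‖ + ε / (K + 1) * ‖C y‖ := by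
        rw [split]
        exact (norm_sub_le _ _).trans (add_le_add e1 e2)
      have heq : ε / (K + 1) * ‖y‖ + ε / (K + 1) * ‖C y‖ = ε / (K + 1) * K := by
        rw [hK]; ring
      have hfin : ε / (K + 1) * K ≤ ε := by
        have h1 : ε / (K + 1) * K ≤ ε / (K + 1) * (K + 1) :=
          mul_le_mul_of_nonneg_left (by linarith) hε'.le
        rwa [div_mul_cancel₀ ε (by positivity : (K : ℝ) + 1 ≠ 0)] at h1
      rw [zero_add]
      exact main.trans (heq ▸ hfin)
    have h0 : ‖C (cfc g B y) - cfc g A (C y)‖ ≤ 0 := le_of_forall_pos_le_add hle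
    rw [← sub_eq_zero]
    exact norm_le_zero_iff.mp h0
  constructor
  · intro x
    have h1 : T (A x) = B (T x) := congrArg (fun S : H →L[ℂ] H => S x) hTA
    rw [show T (A x) = B (T x) from h1, hCB]
  · intro f hf x
    rw [stepT f hf x, stepC f hf (T x)]
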